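/- For every integer n ≥ 1, the n-th Catalan number equals the number of functions f : Fin(2n) → ℤ with f(t) ∈ {1, −1} for every t, with exactly n+1 values equal to 1 (a lattice path of n+1 upsteps and n−1 downsteps), such that every interior even-numbered point lies strictly above the line joining the path's initial and terminal points: for every m with 0 < m < 2n and 2 ∣ m, one has n·S(f, m) > m, where S(f, m) = Σ_{t<m} f(t). -/

import Mathlib

/-- The height of the path `f` at point `m`: the partial sum `S(f, m) = Σ_{t < m} f(t)`. -/
def pathSum {N : ℕ} (f : Fin N → ℤ) (m : ℕ) : ℤ :=
  ∑ t ∈ Finset.univ.filter (fun t : Fin N => (t : ℕ) < m), f t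

namespace Stmt5Aux
open DyckStep

lemma pathSum_zero {N : ℕ} (f : Fin N → ℤ) : pathSum f 0 = 0 := by
  simp [pathSum]

lemma pathSum_succ {N : ℕ} (f : Fin N → ℤ) (m : ℕ) (hm : m < N) :
    pathSum f (m + 1) = pathSum f m + f ⟨m, hm⟩ := by
  have h : Finset.univ.filter (fun t : Fin N => (t : ℕ) < m + 1)
      = insert ⟨m, hm⟩ (Finset.univ.filter (fun t : Fin N => (t : ℕ) < m)) := by
    ext t
    simp only [Finset.mem_filter, Finset.mem_univ, true_and, Finset.mem_insert, Fin.ext_iff]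
    omega
  rw [pathSum, h, Finset.sum_insert (by simp), pathSum]
  ring

lemma pathSum_of_le {N : ℕ} (f : Fin N → ℤ) (m : ℕ) (hm : N ≤ m) :
    pathSum f m = pathSum f N := by
  unfold pathSum
  congr 1
  ext t
  simp only [Finset.mem_filter, Finset.mem_univ, true_and]
  have := t.isLt
  omega

lemma pathSum_eq_card {N : ℕ} (f : Fin N → ℤ) (hf : ∀ t, f t = 1 ∨ f t = -1)
    (m : ℕ) (hm : m ≤ N) :
    pathSum f m
      = 2 * ((Finset.univ.filter (fun t : Fin N => (t : ℕ) < m ∧ f t = 1)).card : ℤ) - m := by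
  induction m with
  | zero => simp [pathSum_zero]
  | succ m ih =>
    have hmN : m < N := by omega
    rw [pathSum_succ f m hmN, ih (by omega)]
    rcases hf ⟨m, hmN⟩ with h1 | h1
    · have he : Finset.univ.filter (fun t : Fin N => (t : ℕ) < m + 1 ∧ f t = 1)
          = insert ⟨m, hmN⟩ (Finset.univ.filter (fun t : Fin N => (t : ℕ) < m ∧ f t = 1)) := by
        ext t
        simp only [Finset.mem_filter, Finset.mem_univ, true_and, Finset.mem_insert, Fin.ext_iff]
        constructor
        · rintro ⟨h2, h3⟩
          rcases Nat.lt_succ_iff_lt_or_eq.mp h2 with h | h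
          · exact Or.inr ⟨h, h3⟩
          · exact Or.inl h
        · rintro (h | ⟨h2, h3⟩)
          · have ht : t = ⟨m, hmN⟩ := Fin.ext h
            exact ⟨by omega, ht ▸ h1⟩
          · exact ⟨by omega, h3⟩
      rw [he, Finset.card_insert_of_notMem (by simp), h1]
      push_cast
      ring
    · have he : Finset.univ.filter (fun t : Fin N => (t : ℕ) < m + 1 ∧ f t = 1)
          = Finset.univ.filter (fun t : Fin N => (t : ℕ) < m ∧ f t = 1) := by
        ext t
        simp only [Finset.mem_filter, Finset.mem_univ, true_and]
        constructor
        · rintro ⟨h2, h3⟩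
          refine ⟨?_, h3⟩
          rcases Nat.lt_succ_iff_lt_or_eq.mp h2 with h | h
          · exact h
          · exfalso
            have ht : t = ⟨m, hmN⟩ := Fin.ext h
            rw [ht, h1] at h3
            norm_num at h3
        · rintro ⟨h2, h3⟩
          exact ⟨by omega, h3⟩
      rw [he, h1]
      push_cast
      ring

lemma filter_lt_self {N : ℕ} (P : Fin N → Prop) [DecidablePred P] :
    Finset.univ.filter (fun t : Fin N => (t : ℕ) < N ∧ P t)
      = Finset.univ.filter P := by
  ext t
  simp [t.isLt]

lemma pathSum_total {N : ℕ} (f : Fin N → ℤ) (hf : ∀ t, f t = 1 ∨ f t = -1) :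
    pathSum f N
      = 2 * ((Finset.univ.filter (fun t : Fin N => f t = 1)).card : ℤ) - N := by
  rw [pathSum_eq_card f hf N le_rfl, filter_lt_self]




def toSteps {N : ℕ} (g : Fin N → ℤ) : List DyckStep :=
  List.ofFn (fun t => if g t = 1 then U else D)

lemma length_toSteps {N : ℕ} (g : Fin N → ℤ) : (toSteps g).length = N :=
  List.length_ofFn

lemma count_take_toSteps {N : ℕ} (g : Fin N → ℤ) (hg : ∀ t, g t = 1 ∨ g t = -1)
    (m : ℕ) (hm : m ≤ N) :
    ((((toSteps g).take m).count U : ℤ) - (((toSteps g).take m).count D : ℤ)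
        = pathSum g m) ∧
    ((toSteps g).take m).count U + ((toSteps g).take m).count D = m := by
  induction m with
  | zero => simp [pathSum_zero]
  | succ m ih =>
    obtain ⟨ih1, ih2⟩ := ih (by omega)
    have hmN : m < N := by omega
    have hstep : (toSteps g).take (m + 1)
        = (toSteps g).take m ++ [if g ⟨m, hmN⟩ = 1 then U else D] := by
      rw [List.take_succ]
      congr
      rw [toSteps, List.getElem?_ofFn]
      simp [List.ofFnNthVal, hmN]
    rw [hstep, pathSum_succ g m hmN]
    rcases hg ⟨m, hmN⟩ with h1 | h1
    · rw [if_pos h1, List.count_append, List.count_append, h1]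
      have c1 : List.count U [U] = 1 := by decide
      have c2 : List.count D [U] = 0 := by decide
      rw [c1, c2]
      constructor
      · push_cast
        omega
      · omega
    · have h2 : g ⟨m, hmN⟩ ≠ 1 := by rw [h1]; norm_num
      rw [if_neg h2, List.count_append, List.count_append, h1]
      have c1 : List.count U [D] = 0 := by decide
      have c2 : List.count D [D] = 1 := by decide
      rw [c1, c2]
      constructor
      · push_cast
        omega
      · omega

lemma toSteps_get {N : ℕ} (L : List DyckStep) (hL : L.length = N) :
    toSteps (fun t : Fin N => if L.get ⟨(t : ℕ), by rw [hL]; exact t.isLt⟩ = U then (1 : ℤ) else -1)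
      = L := by
  unfold toSteps
  apply List.ext_get
  · simp [hL]
  · intro i h1 h2
    rw [List.get_ofFn]
    rcases (L.get ⟨i, h2⟩).dichotomy with h | h <;>
      simp only [List.get_eq_getElem] at h ⊢ <;> simp [h]

/-- The statement's condition. -/
def FCond (n : ℕ) (f : Fin (2 * n) → ℤ) : Prop :=
  (∀ t, f t = 1 ∨ f t = -1) ∧
  (Finset.univ.filter (fun t : Fin (2 * n) => f t = 1)).card = n + 1 ∧
  ∀ m : ℕ, 0 < m → m < 2 * n → 2 ∣ m → (n : ℤ) * pathSum f m > (m : ℤ)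

def GCond (n : ℕ) (g : Fin (2 * n) → ℤ) : Prop :=
  (∀ t, g t = 1 ∨ g t = -1) ∧
  (Finset.univ.filter (fun t : Fin (2 * n) => g t = 1)).card = n ∧
  ∀ m : ℕ, 0 ≤ pathSum g m







lemma GCond.total {n : ℕ} {g : Fin (2 * n) → ℤ} (hg : GCond n g) :
    pathSum g (2 * n) = 0 := by
  rw [pathSum_total g hg.1, hg.2.1]
  push_cast
  ring

lemma take_all_toSteps {N : ℕ} (g : Fin N → ℤ) :
    (toSteps g).take N = toSteps g :=
  List.take_of_length_le (by rw [length_toSteps])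

def dyckOfG {n : ℕ} (g : Fin (2 * n) → ℤ) (hg : GCond n g) : DyckWord where
  toList := toSteps g
  count_U_eq_count_D := by
    have h := count_take_toSteps g hg.1 (2 * n) le_rfl
    rw [take_all_toSteps] at h
    have h0 := hg.total
    omega
  count_D_le_count_U := by
    intro i
    rcases le_or_gt i (2 * n) with hi | hi
    · have h := (count_take_toSteps g hg.1 i hi).1
      have h2 := hg.2.2 i
      omega
    · rw [List.take_of_length_le (by rw [length_toSteps]; omega)]
      have h := count_take_toSteps g hg.1 (2 * n) le_rfl
      rw [take_all_toSteps] at h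
      have h0 := hg.total
      omega

lemma semilength_dyckOfG {n : ℕ} (g : Fin (2 * n) → ℤ) (hg : GCond n g) :
    (dyckOfG g hg).semilength = n := by
  have h := count_take_toSteps g hg.1 (2 * n) le_rfl
  rw [take_all_toSteps] at h
  have h0 := hg.total
  show (dyckOfG g hg).toList.count U = n
  have he : (dyckOfG g hg).toList = toSteps g := rfl
  rw [he]
  omega

def gOfDyck {n : ℕ} (p : DyckWord) (hp : p.semilength = n) : Fin (2 * n) → ℤ :=
  fun t => if p.toList.get ⟨(t : ℕ), by
      rw [← p.two_mul_semilength_eq_length, hp]; exact t.isLt⟩ = U then 1 else -1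

lemma toSteps_gOfDyck {n : ℕ} (p : DyckWord) (hp : p.semilength = n) :
    toSteps (gOfDyck p hp) = p.toList := by
  have hlen : p.toList.length = 2 * n := by
    rw [← p.two_mul_semilength_eq_length, hp]
  exact toSteps_get p.toList hlen

lemma gOfDyck_cond {n : ℕ} (p : DyckWord) (hp : p.semilength = n) :
    GCond n (gOfDyck p hp) := by
  set g := gOfDyck p hp with hgdef
  have hg1 : ∀ t, g t = 1 ∨ g t = -1 := by
    intro t
    unfold g
    unfold gOfDyck
    split <;> simp
  have hts := toSteps_gOfDyck p hp
  have htotal : pathSum g (2 * n) = 0 := by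
    have h := count_take_toSteps g hg1 (2 * n) le_rfl
    rw [take_all_toSteps, hts] at h
    have := p.count_U_eq_count_D
    omega
  refine ⟨hg1, ?_, ?_⟩
  · have h2 := pathSum_total g hg1
    rw [htotal] at h2
    omega
  · intro m
    rcases le_or_gt m (2 * n) with hm | hm
    · have h := (count_take_toSteps g hg1 m hm).1
      rw [hts] at h
      have h2 := p.count_D_le_count_U m
      omega
    · rw [pathSum_of_le g m (by omega), htotal]

def equivGDyck (n : ℕ) :
    {g : Fin (2 * n) → ℤ // GCond n g} ≃ {p : DyckWord // p.semilength = n} where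
  toFun g := ⟨dyckOfG g.1 g.2, semilength_dyckOfG g.1 g.2⟩
  invFun p := ⟨gOfDyck p.1 p.2, gOfDyck_cond p.1 p.2⟩
  left_inv := by
    rintro ⟨g, hg⟩
    ext t
    show gOfDyck (dyckOfG g hg) (semilength_dyckOfG g hg) t = g t
    unfold gOfDyck
    rcases hg.1 t with h | h
    · rw [if_pos, h]
      show (toSteps g).get ⟨t, by rw [length_toSteps]; exact t.isLt⟩ = U
      unfold toSteps
      rw [List.get_ofFn]
      simp [h]
    · rw [if_neg, h]
      show ¬ (toSteps g).get ⟨t, by rw [length_toSteps]; exact t.isLt⟩ = U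
      unfold toSteps
      rw [List.get_ofFn]
      simp only [Fin.cast_mk, Fin.eta]
      simp [h]
  right_inv := by
    rintro ⟨p, hp⟩
    ext1
    show dyckOfG (gOfDyck p hp) (gOfDyck_cond p hp) = p
    apply DyckWord.ext
    show toSteps (gOfDyck p hp) = p.toList
    exact toSteps_gOfDyck p hp



lemma shift_pathSum {n : ℕ} (f g : Fin (2 * n) → ℤ)
    (hfg : ∀ (t : ℕ) (h : t + 1 < 2 * n), g ⟨t, by omega⟩ = f ⟨t + 1, h⟩)
    (h0 : 0 < 2 * n) (m : ℕ) (hm : m + 1 ≤ 2 * n) :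
    pathSum g m = pathSum f (m + 1) - f ⟨0, h0⟩ := by
  induction m with
  | zero =>
    rw [pathSum_zero, pathSum_succ f 0 (by omega), pathSum_zero]
    ring
  | succ m ih =>
    rw [pathSum_succ g m (by omega), ih (by omega),
      pathSum_succ f (m + 1) (by omega), hfg m (by omega)]
    ring

lemma FCond.total {n : ℕ} {f : Fin (2 * n) → ℤ} (hf : FCond n f) :
    pathSum f (2 * n) = 2 := by
  rw [pathSum_total f hf.1, hf.2.1]
  push_cast
  ring

lemma FCond.ge_two {n : ℕ} {f : Fin (2 * n) → ℤ} (hf : FCond n f)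
    (m : ℕ) (h0 : 0 < m) (h1 : m < 2 * n) (h2 : 2 ∣ m) :
    2 ≤ pathSum f m := by
  have hgt := hf.2.2 m h0 h1 h2
  have hc := pathSum_eq_card f hf.1 m (by omega)
  obtain ⟨k, rfl⟩ := h2
  have hpos : 0 < pathSum f (2 * k) := by
    by_contra hS
    push_neg at hS
    have h3 : (n : ℤ) * pathSum f (2 * k) ≤ 0 :=
      mul_nonpos_of_nonneg_of_nonpos (by positivity) hS
    have h4 : (0 : ℤ) < ((2 * k : ℕ) : ℤ) := by exact_mod_cast h0
    linarith
  omega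

lemma FCond.apply_zero {n : ℕ} (hn : 1 ≤ n) {f : Fin (2 * n) → ℤ} (hf : FCond n f) :
    f ⟨0, by omega⟩ = 1 := by
  rcases le_or_gt 2 n with h2n | h2n
  · have hS := hf.ge_two 2 (by omega) (by omega) ⟨1, rfl⟩
    have e1 : pathSum f 2 = pathSum f 1 + f ⟨1, by omega⟩ := pathSum_succ f 1 (by omega)
    have e2 : pathSum f 1 = pathSum f 0 + f ⟨0, by omega⟩ := pathSum_succ f 0 (by omega)
    rw [pathSum_zero] at e2
    rcases hf.1 ⟨0, by omega⟩ with h | h <;> rcases hf.1 ⟨1, by omega⟩ with h' | h' <;>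
      rw [h] at e2 ⊢ <;> omega
  · have hn1 : n = 1 := by omega
    subst hn1
    have huniv : Finset.univ.filter (fun t : Fin (2 * 1) => f t = 1) = Finset.univ := by
      apply Finset.eq_univ_of_card
      rw [hf.2.1]
      simp
    have := Finset.mem_filter.mp (huniv ▸ Finset.mem_univ (⟨0, by omega⟩ : Fin (2 * 1)))
    exact this.2

def shiftG {n : ℕ} (f : Fin (2 * n) → ℤ) : Fin (2 * n) → ℤ :=
  fun t => if h : (t : ℕ) + 1 < 2 * n then f ⟨(t : ℕ) + 1, h⟩ else -1

def unshiftF {n : ℕ} (g : Fin (2 * n) → ℤ) : Fin (2 * n) → ℤ :=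
  fun t => if (t : ℕ) = 0 then 1 else g ⟨(t : ℕ) - 1, by have := t.isLt; omega⟩

lemma shiftG_spec {n : ℕ} (f : Fin (2 * n) → ℤ) (t : ℕ) (h : t + 1 < 2 * n) :
    shiftG f ⟨t, by omega⟩ = f ⟨t + 1, h⟩ := dif_pos h

lemma shiftG_last {n : ℕ} (hn : 1 ≤ n) (f : Fin (2 * n) → ℤ) :
    shiftG f ⟨2 * n - 1, by omega⟩ = -1 := by
  unfold shiftG
  rw [dif_neg]
  show ¬(2 * n - 1 + 1 < 2 * n)
  omega

lemma unshiftF_spec {n : ℕ} (g : Fin (2 * n) → ℤ) (t : ℕ) (h : t + 1 < 2 * n) :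
    g ⟨t, by omega⟩ = unshiftF g ⟨t + 1, h⟩ := by
  unfold unshiftF
  rw [if_neg (show ¬(((⟨t + 1, h⟩ : Fin (2 * n)) : ℕ) = 0) from by
    show ¬(t + 1 = 0); omega)]
  congr 1


lemma GCond.last {n : ℕ} (hn : 1 ≤ n) {g : Fin (2 * n) → ℤ} (hg : GCond n g) :
    g ⟨2 * n - 1, by omega⟩ = -1 ∧ pathSum g (2 * n - 1) = 1 := by
  have htot := hg.total
  have e1 : pathSum g (2 * n - 1 + 1) = pathSum g (2 * n - 1) + g ⟨2 * n - 1, by omega⟩ :=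
    pathSum_succ g (2 * n - 1) (by omega)
  rw [show 2 * n - 1 + 1 = 2 * n by omega, htot] at e1
  have hpos := hg.2.2 (2 * n - 1)
  rcases hg.1 ⟨2 * n - 1, by omega⟩ with h | h <;> rw [h] at e1 ⊢ <;> omega

lemma shiftG_cond {n : ℕ} (hn : 1 ≤ n) {f : Fin (2 * n) → ℤ} (hf : FCond n f) :
    GCond n (shiftG f) := by
  have hg1 : ∀ t, shiftG f t = 1 ∨ shiftG f t = -1 := by
    intro t
    unfold shiftG
    split
    · exact hf.1 _
    · right; rfl
  have hfg : ∀ (t : ℕ) (h : t + 1 < 2 * n), shiftG f ⟨t, by omega⟩ = f ⟨t + 1, h⟩ :=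
    fun t h => shiftG_spec f t h
  have hf0 := hf.apply_zero hn
  have hT1 : pathSum (shiftG f) (2 * n - 1) = 1 := by
    rw [shift_pathSum f (shiftG f) hfg (by omega) (2 * n - 1) (by omega),
      show 2 * n - 1 + 1 = 2 * n by omega, hf.total, hf0]
    ring
  have htot : pathSum (shiftG f) (2 * n) = 0 := by
    have e1 : pathSum (shiftG f) (2 * n - 1 + 1)
        = pathSum (shiftG f) (2 * n - 1) + shiftG f ⟨2 * n - 1, by omega⟩ :=
      pathSum_succ (shiftG f) (2 * n - 1) (by omega)
    rw [show 2 * n - 1 + 1 = 2 * n by omega, hT1, shiftG_last hn f] at e1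
    rw [e1]
    ring
  refine ⟨hg1, ?_, ?_⟩
  · have h2 := pathSum_total (shiftG f) hg1
    rw [htot] at h2
    omega
  · intro m
    rcases Nat.eq_zero_or_pos m with hm0 | hm0
    · subst hm0; rw [pathSum_zero]
    rcases le_or_gt (2 * n) m with hm | hm
    · rw [pathSum_of_le (shiftG f) m hm, htot]
    -- 0 < m < 2 * n
    have hsh := shift_pathSum f (shiftG f) hfg (by omega) m (by omega)
    rw [hf0] at hsh
    rcases Nat.even_or_odd m with he | ho
    · -- m even: pathSum f (m+1) = pathSum f m + f m ≥ 2 - 1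
      obtain ⟨k, hk⟩ := he
      have hge := hf.ge_two m hm0 hm ⟨k, by omega⟩
      have e1 : pathSum f (m + 1) = pathSum f m + f ⟨m, by omega⟩ :=
        pathSum_succ f m (by omega)
      rcases hf.1 ⟨m, by omega⟩ with h | h <;> rw [h] at e1 <;> omega
    · -- m odd: m + 1 even
      obtain ⟨k, hk⟩ := ho
      rcases eq_or_lt_of_le (show m + 1 ≤ 2 * n by omega) with he | hlt
      · rw [he, hf.total] at hsh
        omega
      · have hge := hf.ge_two (m + 1) (by omega) hlt ⟨k + 1, by omega⟩
        omega

lemma unshiftF_cond {n : ℕ} (hn : 1 ≤ n) {g : Fin (2 * n) → ℤ} (hg : GCond n g) :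
    FCond n (unshiftF g) := by
  have hf1 : ∀ t, unshiftF g t = 1 ∨ unshiftF g t = -1 := by
    intro t
    unfold unshiftF
    split
    · left; rfl
    · exact hg.1 _
  have hfg : ∀ (t : ℕ) (h : t + 1 < 2 * n), g ⟨t, by omega⟩ = unshiftF g ⟨t + 1, h⟩ :=
    fun t h => unshiftF_spec g t h
  have hf0 : unshiftF g ⟨0, by omega⟩ = 1 := if_pos rfl
  obtain ⟨hlast, hT1⟩ := hg.last hn
  have hftot : pathSum (unshiftF g) (2 * n) = 2 := by
    have hsh := shift_pathSum (unshiftF g) g hfg (by omega) (2 * n - 1) (by omega)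
    rw [show 2 * n - 1 + 1 = 2 * n by omega, hf0, hT1] at hsh
    omega
  refine ⟨hf1, ?_, ?_⟩
  · have h2 := pathSum_total (unshiftF g) hf1
    rw [hftot] at h2
    omega
  · intro m h0 h1 h2
    obtain ⟨k, rfl⟩ := h2
    have hsh := shift_pathSum (unshiftF g) g hfg (by omega) (2 * k - 1) (by omega)
    rw [show 2 * k - 1 + 1 = 2 * k by omega, hf0] at hsh
    have hge0 := hg.2.2 (2 * k - 1)
    have hcard := pathSum_eq_card g hg.1 (2 * k - 1) (by omega)
    have hodd : 1 ≤ pathSum g (2 * k - 1) := by omega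
    have hS2 : 2 ≤ pathSum (unshiftF g) (2 * k) := by omega
    have hcast : ((2 * k : ℕ) : ℤ) < 2 * (n : ℤ) := by exact_mod_cast h1
    have : 2 * (n : ℤ) ≤ (n : ℤ) * pathSum (unshiftF g) (2 * k) := by
      nlinarith [show (1:ℤ) ≤ (n:ℤ) by exact_mod_cast hn]
    linarith

def equivFG (n : ℕ) (hn : 1 ≤ n) :
    {f : Fin (2 * n) → ℤ // FCond n f} ≃ {g : Fin (2 * n) → ℤ // GCond n g} where
  toFun f := ⟨shiftG f.1, shiftG_cond hn f.2⟩
  invFun g := ⟨unshiftF g.1, unshiftF_cond hn g.2⟩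
  left_inv := by
    rintro ⟨f, hf⟩
    ext t
    show unshiftF (shiftG f) t = f t
    unfold unshiftF
    split
    · next h =>
      have ht : t = ⟨0, by omega⟩ := Fin.ext h
      rw [ht, hf.apply_zero hn]
    · next h =>
      have hlt : (t : ℕ) - 1 + 1 < 2 * n := by have := t.isLt; omega
      rw [shiftG_spec f ((t : ℕ) - 1) hlt]
      congr 1
      apply Fin.ext
      show (t : ℕ) - 1 + 1 = (t : ℕ)
      omega
  right_inv := by
    rintro ⟨g, hg⟩
    ext t
    show shiftG (unshiftF g) t = g t
    unfold shiftG
    split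
    · next h =>
      rw [← unshiftF_spec g (t : ℕ) h]
    · next h =>
      have ht : t = ⟨2 * n - 1, by have := t.isLt; omega⟩ := by
        apply Fin.ext
        show (t : ℕ) = 2 * n - 1
        have := t.isLt
        omega
      rw [ht, (hg.last hn).1]

end Stmt5Aux

/-- the n-th Catalan number is the number of lattice paths of `n+1` upsteps
and `n−1` downsteps (functions `f : Fin (2n) → ℤ` with values in {1, −1} and exactly
`n+1` values 1) all of whose interior even-numbered points lie strictly above the line
joining the initial and terminal points: `n·S(f, m) > m` for all `0 < m < 2n` with `2 ∣ m`. -/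
theorem stmt_5 (n : ℕ) (hn : 1 ≤ n) :
    catalan n = Nat.card {f : Fin (2 * n) → ℤ //
      (∀ t, f t = 1 ∨ f t = -1) ∧
      (Finset.univ.filter (fun t : Fin (2 * n) => f t = 1)).card = n + 1 ∧
      ∀ m : ℕ, 0 < m → m < 2 * n → 2 ∣ m → (n : ℤ) * pathSum f m > (m : ℤ)} := by
  calc catalan n
      = Fintype.card {p : DyckWord // p.semilength = n} :=
        (DyckWord.card_dyckWord_semilength_eq_catalan n).symm
    _ = Nat.card {p : DyckWord // p.semilength = n} := Nat.card_eq_fintype_card.symm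
    _ = Nat.card {g : Fin (2 * n) → ℤ // Stmt5Aux.GCond n g} :=
        (Nat.card_congr (Stmt5Aux.equivGDyck n)).symm
    _ = Nat.card {f : Fin (2 * n) → ℤ // Stmt5Aux.FCond n f} :=
        (Nat.card_congr (Stmt5Aux.equivFG n hn)).symm
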